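/- The hybrid ordinary-Cauchy (HOC) function g(x) = x²/2 − φ(x), where φ(x) = x²/2 for |x| ≤ λ and φ(x) = ((γ² + λ²)/2)·ln(1 + x²/γ²) + δ for |x| > λ (with δ chosen so that φ is continuous), is convex on ℝ. -/

import Mathlib

open Real Set Filter

lemma outer_hasDeriv (lam gam : ℝ) (hgam : 0 < gam) (x : ℝ) :
    HasDerivAt (fun x : ℝ => x^2/2 - (((gam^2 + lam^2)/2) * Real.log (1 + x^2/gam^2)
      + (lam^2/2 - ((gam^2 + lam^2)/2) * Real.log (1 + lam^2/gam^2))))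
      (x*(x^2 - lam^2)/(x^2 + gam^2)) x := by
  have hpos : (0:ℝ) < 1 + x^2/gam^2 := by positivity
  have h1 : HasDerivAt (fun x : ℝ => 1 + x^2/gam^2) (2*x/gam^2) x := by
    have := ((hasDerivAt_pow 2 x).div_const (gam^2)).const_add (1:ℝ)
    simpa [mul_comm] using this
  have h2 := (h1.log (ne_of_gt hpos)).const_mul ((gam^2 + lam^2)/2)
  have h3 := ((hasDerivAt_pow 2 x).div_const 2).sub ((h2).add_const
      (lam^2/2 - ((gam^2 + lam^2)/2) * Real.log (1 + lam^2/gam^2)))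
  refine h3.congr_deriv ?_
  have hg : gam^2 ≠ 0 := by positivity
  have hx2 : x^2 + gam^2 ≠ 0 := by positivity
  field_simp
  ring

lemma mono_core (lam gam : ℝ) (hlam : 0 < lam) (hgam : 0 < gam)
    {a b : ℝ} (ha : lam ≤ a) (hab : a ≤ b) :
    a*(a^2 - lam^2)/(a^2 + gam^2) ≤ b*(b^2 - lam^2)/(b^2 + gam^2) := by
  rw [div_le_div_iff₀ (by positivity) (by positivity)]
  have hd : 0 ≤ b - a := sub_nonneg.2 hab
  have hb : lam ≤ b := ha.trans hab
  have ha0 : 0 < a := hlam.trans_le ha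
  have hb0 : 0 < b := hlam.trans_le hb
  have hla : lam^2 ≤ a^2 := by nlinarith
  have key : 0 ≤ (b - a) * (a^2*b^2 + lam^2*(a*b) + gam^2*(a^2 + a*b + b^2 - lam^2)) := by
    apply mul_nonneg hd
    have : 0 ≤ a^2 + a*b + b^2 - lam^2 := by nlinarith
    have h2 : 0 ≤ gam^2 * (a^2 + a*b + b^2 - lam^2) := mul_nonneg (sq_nonneg _) this
    nlinarith [mul_pos ha0 hb0, sq_nonneg (a*b)]
  nlinarith [key]

theorem hoc_residual_convex (lam gam : ℝ) (hlam : 0 < lam) (hgam : 0 < gam) :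
    ConvexOn ℝ Set.univ (fun x : ℝ =>
      x^2/2 - (if |x| ≤ lam then x^2/2
        else ((gam^2 + lam^2)/2) * Real.log (1 + x^2/gam^2)
          + (lam^2/2 - ((gam^2 + lam^2)/2) * Real.log (1 + lam^2/gam^2)))) := by
  set g : ℝ → ℝ := fun x =>
      x^2/2 - (if |x| ≤ lam then x^2/2
        else ((gam^2 + lam^2)/2) * Real.log (1 + x^2/gam^2)
          + (lam^2/2 - ((gam^2 + lam^2)/2) * Real.log (1 + lam^2/gam^2))) with hgdef
  set h : ℝ → ℝ := fun x => x^2/2 - (((gam^2 + lam^2)/2) * Real.log (1 + x^2/gam^2)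
      + (lam^2/2 - ((gam^2 + lam^2)/2) * Real.log (1 + lam^2/gam^2))) with hhdef
  set D : ℝ → ℝ := fun x => if |x| ≤ lam then 0 else x*(x^2 - lam^2)/(x^2 + gam^2) with hDdef
  -- g = h on |x| ≥ lam
  have hgh : ∀ x : ℝ, lam ≤ |x| → g x = h x := by
    intro x hx
    rcases eq_or_lt_of_le hx with hx' | hx'
    · have hx2 : x^2 = lam^2 := by
        have : |x|^2 = lam^2 := by rw [← hx']
        simpa [sq_abs] using this
      simp only [hgdef, hhdef]
      rw [if_pos hx'.ge, hx2]
      ring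
    · simp only [hgdef, hhdef, if_neg (not_le.2 hx')]
  -- g = 0 on |x| ≤ lam
  have hg0 : ∀ x : ℝ, |x| ≤ lam → g x = 0 := by
    intro x hx; simp [hgdef, hx]
  have hderiv : ∀ x : ℝ, HasDerivAt g (D x) x := by
    intro x
    rcases lt_trichotomy |x| lam with hx | hx | hx
    · have hev : g =ᶠ[nhds x] (fun _ => (0:ℝ)) := by
        have : ∀ᶠ y in nhds x, |y| < lam :=
          continuous_abs.continuousAt.eventually_lt continuousAt_const hx
        filter_upwards [this] with y hy
        exact hg0 y hy.le
      have := (hasDerivAt_const x (0:ℝ)).congr_of_eventuallyEq hev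
      simpa [hDdef, hx.le] using this
    · -- boundary: x = lam or x = -lam
      have hDx : D x = 0 := by simp [hDdef, hx.le]
      rw [hDx]
      rcases (abs_eq hlam.le).mp hx with h1 | h1 <;> rw [h1]
      · -- x = lam
        have left : HasDerivWithinAt g 0 (Iic lam) lam := by
          have hev : g =ᶠ[nhdsWithin lam (Iic lam)] (fun _ => (0:ℝ)) := by
            have h1 : ∀ᶠ y in nhdsWithin lam (Iic lam), -lam < y :=
              eventually_nhdsWithin_of_eventually_nhds
                (eventually_gt_nhds (by linarith))
            filter_upwards [h1, self_mem_nhdsWithin] with y hy1 (hy2 : y ≤ lam)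
            exact hg0 y (abs_le.2 ⟨hy1.le, hy2⟩)
          exact (hasDerivWithinAt_const lam (Iic lam) 0).congr_of_eventuallyEq hev
            (hg0 lam (by simp [abs_of_pos hlam]))
        have right : HasDerivWithinAt g 0 (Ici lam) lam := by
          have := ((outer_hasDeriv lam gam hgam lam).hasDerivWithinAt (s := Ici lam))
          have h0 : lam*(lam^2 - lam^2)/(lam^2 + gam^2) = 0 := by ring_nf
          rw [h0] at this
          refine this.congr_of_eventuallyEq ?_ ?_
          · filter_upwards [self_mem_nhdsWithin] with y (hy : lam ≤ y)
            exact hgh y (hy.trans (le_abs_self y))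
          · exact hgh lam (by simp [abs_of_pos hlam])
        have := left.union right
        rwa [Iic_union_Ici, hasDerivWithinAt_univ] at this
      · -- x = -lam
        have left : HasDerivWithinAt g 0 (Iic (-lam)) (-lam) := by
          have := ((outer_hasDeriv lam gam hgam (-lam)).hasDerivWithinAt (s := Iic (-lam)))
          have h0 : (-lam)*((-lam)^2 - lam^2)/((-lam)^2 + gam^2) = 0 := by ring_nf
          rw [h0] at this
          refine this.congr_of_eventuallyEq ?_ ?_
          · filter_upwards [self_mem_nhdsWithin] with y (hy : y ≤ -lam)
            exact hgh y (by rw [abs_of_nonpos (by linarith)]; linarith)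
          · exact hgh (-lam) (by simp [abs_of_pos hlam])
        have right : HasDerivWithinAt g 0 (Ici (-lam)) (-lam) := by
          have hev : g =ᶠ[nhdsWithin (-lam) (Ici (-lam))] (fun _ => (0:ℝ)) := by
            have h1 : ∀ᶠ y in nhdsWithin (-lam) (Ici (-lam)), y < lam :=
              eventually_nhdsWithin_of_eventually_nhds
                (eventually_lt_nhds (by linarith))
            filter_upwards [h1, self_mem_nhdsWithin] with y hy1 (hy2 : -lam ≤ y)
            exact hg0 y (abs_le.2 ⟨hy2, hy1.le⟩)
          exact (hasDerivWithinAt_const (-lam) (Ici (-lam)) 0).congr_of_eventuallyEq hev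
            (hg0 (-lam) (by simp [abs_of_pos hlam]))
        have := left.union right
        rwa [Iic_union_Ici, hasDerivWithinAt_univ] at this
    · have hev : g =ᶠ[nhds x] h := by
        have : ∀ᶠ y in nhds x, lam < |y| :=
          continuousAt_const.eventually_lt continuous_abs.continuousAt hx
        filter_upwards [this] with y hy
        exact hgh y hy.le
      have := (outer_hasDeriv lam gam hgam x).congr_of_eventuallyEq hev
      simpa [hDdef, not_le.2 hx] using this
  -- D is monotone
  have hmono : Monotone D := by
    intro a b hab
    have Dpos : ∀ t : ℝ, lam < t → 0 ≤ D t := by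
      intro t ht
      have : ¬ |t| ≤ lam := not_le.2 (ht.trans_le (le_abs_self t))
      rw [hDdef]; simp only [this, if_false]
      have h1 : 0 ≤ t := by linarith
      have h2 : 0 ≤ t^2 - lam^2 := by nlinarith
      positivity
    have Dneg : ∀ t : ℝ, t < -lam → D t ≤ 0 := by
      intro t ht
      have habs : lam < |t| := by rw [abs_of_nonpos (by linarith)]; linarith
      have : ¬ |t| ≤ lam := not_le.2 habs
      rw [hDdef]; simp only [this, if_false]
      apply div_nonpos_of_nonpos_of_nonneg
      · apply mul_nonpos_of_nonpos_of_nonneg (by linarith)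
        nlinarith
      · positivity
    by_cases ha : |a| ≤ lam
    · by_cases hb : |b| ≤ lam
      · simp [hDdef, ha, hb]
      · have hb' : lam < b := by
          rcases lt_or_ge lam b with h1 | h1
          · exact h1
          · exfalso; apply hb
            rw [abs_le] at ha ⊢
            exact ⟨le_trans ha.1 hab, h1⟩
        have : D a = 0 := by simp [hDdef, ha]
        rw [this]; exact Dpos b hb'
    · have ha' := not_le.1 ha
      rcases lt_or_ge a 0 with haneg | hapos
      · -- a < -lam
        have haa : a < -lam := by
          rcases lt_or_ge a (-lam) with h1 | h1
          · exact h1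
          · exfalso; exact ha (abs_le.2 ⟨h1, by linarith⟩)
        by_cases hb : |b| ≤ lam
        · have : D b = 0 := by simp [hDdef, hb]
          rw [this]; exact Dneg a haa
        · rcases lt_or_ge b (-lam) with hbb | hbb
          · -- both < -lam
            have hb' : ¬ |b| ≤ lam := hb
            rw [hDdef]; simp only [ha, hb', if_false]
            have := mono_core lam gam hlam hgam (a := -b) (b := -a)
              (by linarith) (by linarith)
            have e1 : (-b)*((-b)^2 - lam^2)/((-b)^2 + gam^2)
                = -(b*(b^2 - lam^2)/(b^2 + gam^2)) := by ring
            have e2 : (-a)*((-a)^2 - lam^2)/((-a)^2 + gam^2)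
                = -(a*(a^2 - lam^2)/(a^2 + gam^2)) := by ring
            rw [e1, e2] at this
            linarith
          · have hb2 : lam < b := by
              rcases lt_or_ge lam b with h1 | h1
              · exact h1
              · exfalso; exact hb (abs_le.2 ⟨hbb, h1⟩)
            exact (Dneg a haa).trans (Dpos b hb2)
      · -- lam < a
        have haa : lam < a := by
          rcases lt_or_ge lam a with h1 | h1
          · exact h1
          · exfalso; exact ha (abs_le.2 ⟨by linarith, h1⟩)
        have hbb : lam < b := haa.trans_le hab
        have hb' : ¬ |b| ≤ lam := not_le.2 (hbb.trans_le (le_abs_self b))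
        rw [hDdef]; simp only [ha, hb', if_false]
        exact mono_core lam gam hlam hgam haa.le hab
  have hdiff : Differentiable ℝ g := fun x => (hderiv x).differentiableAt
  have hdg : deriv g = D := funext fun x => (hderiv x).deriv
  have := Monotone.convexOn_univ_of_deriv hdiff (hdg ▸ hmono)
  exact this
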